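/- Let n ≥ 1 be an integer, 1 ≤ p < ∞ and 0 ≤ β < n. If f belongs to the vanishing-at-infinity subspace L^{p,β}_∞(ℝⁿ) and g ∈ L¹(ℝⁿ), then the convolution f ∗ g is defined almost everywhere and belongs to L^{p,β}_∞(ℝⁿ); i.e. L^{p,β}_∞ is invariant under convolution with integrable functions. -/

import Mathlib

open MeasureTheory Metric ENNReal Filter

noncomputable def morreyA (n : ℕ) (p β : ℝ)
    (f : EuclideanSpace ℝ (Fin n) → ℂ)
    (y : EuclideanSpace ℝ (Fin n)) (r : ℝ) : ℝ≥0∞ :=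
  ENNReal.ofReal (r ^ (-β)) * ∫⁻ x in ball y r, (‖f x‖₊ : ℝ≥0∞) ^ p

/-- The (global) Morrey norm `‖f‖_{L^{p,β}}`. -/
noncomputable def morreyNorm (n : ℕ) (p β : ℝ)
    (f : EuclideanSpace ℝ (Fin n) → ℂ) : ℝ≥0∞ :=
  ⨆ (y : EuclideanSpace ℝ (Fin n)) (r : ℝ) (_ : 0 < r),
    (morreyA n p β f y r) ^ (1 / p)

/-- Membership in the vanishing-at-origin subspace `L^{p,β}_0`. -/
def vanishAtOrigin (n : ℕ) (p β : ℝ) (f : EuclideanSpace ℝ (Fin n) → ℂ) : Prop :=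
  Tendsto
    (fun t : ℝ => ⨆ (y : EuclideanSpace ℝ (Fin n)) (r : ℝ) (_ : 0 < r) (_ : r ≤ t),
      morreyA n p β f y r)
    (nhdsWithin 0 (Set.Ioi 0)) (nhds 0)

/-- Membership in the vanishing-at-infinity subspace `L^{p,β}_∞`. -/
def vanishAtInfinity (n : ℕ) (p β : ℝ) (f : EuclideanSpace ℝ (Fin n) → ℂ) : Prop :=
  Tendsto
    (fun t : ℝ => ⨆ (y : EuclideanSpace ℝ (Fin n)) (r : ℝ) (_ : t ≤ r),
      morreyA n p β f y r)
    atTop (nhds 0)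

/-- Membership in the truncation subspace `L^{p,β}_*`. -/
def vanishTrunc (n : ℕ) (p β : ℝ) (f : EuclideanSpace ℝ (Fin n) → ℂ) : Prop :=
  Tendsto
    (fun N : ℝ => ⨆ (y : EuclideanSpace ℝ (Fin n)) (r : ℝ) (_ : 0 < r),
      ENNReal.ofReal (r ^ (-β)) *
        ∫⁻ x in ball y r ∩ {x : EuclideanSpace ℝ (Fin n) | N < ‖x‖},
          (‖f x‖₊ : ℝ≥0∞) ^ p)
    atTop (nhds 0)


lemma jensen_aux {α : Type*} [MeasurableSpace α] {μ : Measure α} {p : ℝ} (hp : 1 ≤ p)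
    {F w : α → ℝ≥0∞} (hF : Measurable F) (hw : Measurable w) :
    (∫⁻ z, F z * w z ∂μ) ^ p ≤ (∫⁻ z, w z ∂μ) ^ (p - 1) * ∫⁻ z, F z ^ p * w z ∂μ := by
  rcases eq_or_lt_of_le hp with h1 | h1
  · subst h1
    simp [ENNReal.rpow_one]
  · have hpq : p.HolderConjugate (Real.conjExponent p) := Real.HolderConjugate.conjExponent h1
    set q := Real.conjExponent p with hqdef
    have hp0 : p ≠ 0 := hpq.ne_zero
    have hq0 : q ≠ 0 := hpq.symm.ne_zero
    have hw1 : ∀ z, w z = w z ^ (1/p) * w z ^ (1/q) := by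
      intro z
      rw [← ENNReal.rpow_add_of_nonneg _ _ (one_div_nonneg.mpr hpq.nonneg)
        (one_div_nonneg.mpr hpq.symm.nonneg)]
      rw [one_div, one_div, hpq.inv_add_inv_eq_one, ENNReal.rpow_one]
    have holder := ENNReal.lintegral_mul_le_Lp_mul_Lq μ hpq
      ((hF.mul (ENNReal.continuous_rpow_const.measurable.comp hw)).aemeasurable)
      ((ENNReal.continuous_rpow_const.measurable.comp hw).aemeasurable)
      (f := fun z => F z * w z ^ (1/p)) (g := fun z => w z ^ (1/q))
    have e1 : ∫⁻ z, ((fun z => F z * w z ^ (1/p)) * fun z => w z ^ (1/q)) z ∂μ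
        = ∫⁻ z, F z * w z ∂μ := by
      apply lintegral_congr
      intro z
      simp only [Pi.mul_apply]
      rw [mul_assoc, ← hw1 z]
    have e2 : ∫⁻ z, (F z * w z ^ (1/p)) ^ p ∂μ = ∫⁻ z, F z ^ p * w z ∂μ := by
      apply lintegral_congr
      intro z
      rw [ENNReal.mul_rpow_of_nonneg _ _ (by positivity), ← ENNReal.rpow_mul,
        one_div_mul_cancel hp0, ENNReal.rpow_one]
    have e3 : ∫⁻ z, (w z ^ (1/q)) ^ q ∂μ = ∫⁻ z, w z ∂μ := by
      apply lintegral_congr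
      intro z
      rw [← ENNReal.rpow_mul, one_div_mul_cancel hq0, ENNReal.rpow_one]
    rw [e1, e2, e3] at holder
    calc (∫⁻ z, F z * w z ∂μ) ^ p
        ≤ ((∫⁻ z, F z ^ p * w z ∂μ) ^ (1/p) * (∫⁻ z, w z ∂μ) ^ (1/q)) ^ p :=
          ENNReal.rpow_le_rpow holder (by positivity)
      _ = (∫⁻ z, w z ∂μ) ^ (p - 1) * ∫⁻ z, F z ^ p * w z ∂μ := by
          rw [ENNReal.mul_rpow_of_nonneg _ _ hpq.nonneg, ← ENNReal.rpow_mul,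
            ← ENNReal.rpow_mul, one_div_mul_cancel hp0, ENNReal.rpow_one,
            one_div_mul_eq_div, hpq.div_conj_eq_sub_one, mul_comm]


lemma translate_lintegral {n : ℕ} (F : EuclideanSpace ℝ (Fin n) → ℝ≥0∞)
    (y z : EuclideanSpace ℝ (Fin n)) (r : ℝ) :
    ∫⁻ x in ball y r, F (x - z) = ∫⁻ x in ball (y - z) r, F x := by
  rw [← lintegral_indicator measurableSet_ball, ← lintegral_indicator measurableSet_ball]
  have h1 : ∀ x : EuclideanSpace ℝ (Fin n),
      (ball y r).indicator (fun x => F (x - z)) x = (ball (y - z) r).indicator F (x - z) := by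
    intro x
    have hmem : x ∈ ball y r ↔ x - z ∈ ball (y - z) r := by
      simp [mem_ball, dist_sub_right]
    by_cases hx : x ∈ ball y r
    · rw [Set.indicator_of_mem hx, Set.indicator_of_mem (hmem.mp hx)]
    · rw [Set.indicator_of_notMem hx, Set.indicator_of_notMem (fun h => hx (hmem.mpr h))]
  calc ∫⁻ x, (ball y r).indicator (fun x => F (x - z)) x
      = ∫⁻ x, (ball (y - z) r).indicator F (x - z) := lintegral_congr h1
    _ = ∫⁻ x, (ball (y - z) r).indicator F x := lintegral_sub_right_eq_self _ z

lemma cancel_aux {r : ℝ} (hr : 0 < r) (β : ℝ) :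
    ENNReal.ofReal (r ^ β) * ENNReal.ofReal (r ^ (-β)) = 1 := by
  rw [← ENNReal.ofReal_mul (Real.rpow_nonneg hr.le _), ← Real.rpow_add hr,
    add_neg_cancel, Real.rpow_zero, ENNReal.ofReal_one]

lemma key_bound {n : ℕ} {p : ℝ} (hp : 1 ≤ p) {f g : EuclideanSpace ℝ (Fin n) → ℂ}
    (hf : Measurable f) (hg : Measurable g) (y : EuclideanSpace ℝ (Fin n)) (r : ℝ)
    (S : ℝ≥0∞) (hS : ∀ z, ∫⁻ x in ball (y - z) r, (‖f x‖₊ : ℝ≥0∞) ^ p ≤ S) :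
    ∫⁻ x in ball y r, (∫⁻ z, (‖f (x - z)‖₊ : ℝ≥0∞) * ‖g z‖₊) ^ p
      ≤ (∫⁻ z, (‖g z‖₊ : ℝ≥0∞)) ^ p * S := by
  have hp0 : (0:ℝ) ≤ p := le_trans zero_le_one hp
  set G := ∫⁻ z, (‖g z‖₊ : ℝ≥0∞) with hG
  have hfm : ∀ z : EuclideanSpace ℝ (Fin n),
      Measurable fun x => (‖f (x - z)‖₊ : ℝ≥0∞) := fun z =>
    (hf.comp (measurable_id.sub measurable_const)).nnnorm.coe_nnreal_ennreal
  have hgm : Measurable fun z => (‖g z‖₊ : ℝ≥0∞) := hg.nnnorm.coe_nnreal_ennreal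
  have hFm : Measurable fun q : EuclideanSpace ℝ (Fin n) × EuclideanSpace ℝ (Fin n) =>
      (‖f (q.1 - q.2)‖₊ : ℝ≥0∞) ^ p * ‖g q.2‖₊ :=
    ((ENNReal.continuous_rpow_const.measurable.comp
      ((hf.comp (measurable_fst.sub measurable_snd)).nnnorm.coe_nnreal_ennreal)).mul
      (hgm.comp measurable_snd))
  calc ∫⁻ x in ball y r, (∫⁻ z, (‖f (x - z)‖₊ : ℝ≥0∞) * ‖g z‖₊) ^ p
      ≤ ∫⁻ x in ball y r, G ^ (p - 1) * ∫⁻ z, (‖f (x - z)‖₊ : ℝ≥0∞) ^ p * ‖g z‖₊ :=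
        lintegral_mono fun x => jensen_aux hp
          ((hf.comp (measurable_const.sub measurable_id)).nnnorm.coe_nnreal_ennreal) hgm
    _ = G ^ (p - 1) * ∫⁻ x in ball y r, ∫⁻ z, (‖f (x - z)‖₊ : ℝ≥0∞) ^ p * ‖g z‖₊ :=
        lintegral_const_mul _ hFm.lintegral_prod_right'
    _ = G ^ (p - 1) * ∫⁻ z, ∫⁻ x in ball y r, (‖f (x - z)‖₊ : ℝ≥0∞) ^ p * ‖g z‖₊ := by
        rw [lintegral_lintegral_swap hFm.aemeasurable]
    _ ≤ G ^ (p - 1) * ∫⁻ z, (‖g z‖₊ : ℝ≥0∞) * S := by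
        refine mul_le_mul_right (lintegral_mono fun z => ?_) _
        have hm2 : Measurable fun x : EuclideanSpace ℝ (Fin n) => (‖f (x - z)‖₊ : ℝ≥0∞) ^ p :=
          ENNReal.continuous_rpow_const.measurable.comp (hfm z)
        rw [lintegral_mul_const _ hm2]
        have htr : ∫⁻ x in ball y r, (‖f (x - z)‖₊ : ℝ≥0∞) ^ p
            = ∫⁻ x in ball (y - z) r, (‖f x‖₊ : ℝ≥0∞) ^ p :=
          translate_lintegral (fun x => (‖f x‖₊ : ℝ≥0∞) ^ p) y z r
        rw [mul_comm]
        exact mul_le_mul_right (le_trans (le_of_eq htr) (hS z)) _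
    _ = G ^ (p - 1) * (G * S) := by rw [lintegral_mul_const _ hgm]
    _ = G ^ p * S := by
        rw [show p = (p - 1) + 1 by ring, ENNReal.rpow_add_of_nonneg _ _ (by linarith) zero_le_one,
          ENNReal.rpow_one]
        ring

/-- `L^{p,β}_∞` is invariant under convolution with integrable functions: if `f ∈ L^{p,β}_∞`
and `g ∈ L¹`, then `f ∗ g` is defined a.e. and belongs to `L^{p,β}_∞`. -/
theorem vanishAtInfinity_convolution_invariant (n : ℕ) (hn : 1 ≤ n) (p β : ℝ)
    (hp : 1 ≤ p) (hβ : 0 ≤ β) (hβn : β < n)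
    (f g : EuclideanSpace ℝ (Fin n) → ℂ) (hf : Measurable f)
    (hfM : morreyNorm n p β f < ⊤) (hfi : vanishAtInfinity n p β f)
    (hg : Integrable g) :
    (∀ᵐ x : EuclideanSpace ℝ (Fin n), Integrable (fun z => f (x - z) * g z)) ∧
    morreyNorm n p β (fun x => ∫ z, f (x - z) * g z) < ⊤ ∧
    vanishAtInfinity n p β (fun x => ∫ z, f (x - z) * g z) := by
  have hp0 : (0:ℝ) < p := lt_of_lt_of_le zero_lt_one hp
  -- replace g by a measurable representative
  set g' : EuclideanSpace ℝ (Fin n) → ℂ := hg.1.mk g with hg'def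
  have hg'ae : g =ᵐ[volume] g' := hg.1.ae_eq_mk
  have hg'm : Measurable g' := hg.1.stronglyMeasurable_mk.measurable
  have hg'i : Integrable g' := hg.congr hg'ae
  have conv_eq : (fun x => ∫ z, f (x - z) * g z) = (fun x => ∫ z, f (x - z) * g' z) := by
    funext x
    exact integral_congr_ae (hg'ae.mono fun z hz => by dsimp only; rw [hz])
  set G := ∫⁻ z, (‖g' z‖₊ : ℝ≥0∞) with hGdef
  have hGfin : G < ⊤ := hg'i.2
  have hGp : G ^ p ≠ ⊤ := (ENNReal.rpow_lt_top_of_nonneg hp0.le hGfin.ne).ne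
  -- the majorant
  set h : EuclideanSpace ℝ (Fin n) → ℝ≥0∞ :=
    fun x => ∫⁻ z, (‖f (x - z)‖₊ : ℝ≥0∞) * ‖g' z‖₊ with hhdef
  have hhm : Measurable h := by
    apply Measurable.lintegral_prod_right'
      (f := fun q : EuclideanSpace ℝ (Fin n) × EuclideanSpace ℝ (Fin n) =>
        (‖f (q.1 - q.2)‖₊ : ℝ≥0∞) * ‖g' q.2‖₊)
    exact ((hf.comp (measurable_fst.sub measurable_snd)).nnnorm.coe_nnreal_ennreal.mul
      ((hg'm.comp measurable_snd).nnnorm.coe_nnreal_ennreal))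
  have hconv_le : ∀ x, (‖∫ z, f (x - z) * g' z‖₊ : ℝ≥0∞) ≤ h x := by
    intro x
    refine le_trans (enorm_integral_le_lintegral_enorm _) (le_of_eq ?_)
    exact lintegral_congr fun z => enorm_mul _ _
  -- bound morreyA of f by S ⇒ ball integrals bounded
  have hball_of_S : ∀ (r : ℝ), 0 < r → ∀ (S : ℝ≥0∞),
      (∀ z, morreyA n p β f z r ≤ S) →
      ∀ z, ∫⁻ x in ball z r, (‖f x‖₊ : ℝ≥0∞) ^ p ≤ ENNReal.ofReal (r ^ β) * S := by
    intro r hr S hS z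
    have h1 := hS z
    unfold morreyA at h1
    calc ∫⁻ x in ball z r, (‖f x‖₊ : ℝ≥0∞) ^ p
        = (ENNReal.ofReal (r ^ β) * ENNReal.ofReal (r ^ (-β))) *
            ∫⁻ x in ball z r, (‖f x‖₊ : ℝ≥0∞) ^ p := by rw [cancel_aux hr, one_mul]
      _ = ENNReal.ofReal (r ^ β) *
            (ENNReal.ofReal (r ^ (-β)) * ∫⁻ x in ball z r, (‖f x‖₊ : ℝ≥0∞) ^ p) := by
            rw [mul_assoc]
      _ ≤ ENNReal.ofReal (r ^ β) * S := mul_le_mul_right h1 _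
  -- main estimate on h
  have hmain : ∀ (y : EuclideanSpace ℝ (Fin n)) (r : ℝ), 0 < r → ∀ (S : ℝ≥0∞),
      (∀ z, morreyA n p β f z r ≤ S) →
      ENNReal.ofReal (r ^ (-β)) * ∫⁻ x in ball y r, (h x) ^ p ≤ G ^ p * S := by
    intro y r hr S hS
    have h2 := key_bound hp hf hg'm y r (ENNReal.ofReal (r ^ β) * S)
      (fun z => hball_of_S r hr S hS (y - z))
    calc ENNReal.ofReal (r ^ (-β)) * ∫⁻ x in ball y r, (h x) ^ p
        ≤ ENNReal.ofReal (r ^ (-β)) * (G ^ p * (ENNReal.ofReal (r ^ β) * S)) :=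
          mul_le_mul_right h2 _
      _ = (ENNReal.ofReal (r ^ β) * ENNReal.ofReal (r ^ (-β))) * (G ^ p * S) := by ring
      _ = G ^ p * S := by rw [cancel_aux hr, one_mul]
  -- morreyA bound for the convolution
  have hmorA : ∀ (y : EuclideanSpace ℝ (Fin n)) (r : ℝ), 0 < r → ∀ (S : ℝ≥0∞),
      (∀ z, morreyA n p β f z r ≤ S) →
      morreyA n p β (fun x => ∫ z, f (x - z) * g z) y r ≤ G ^ p * S := by
    intro y r hr S hS
    rw [conv_eq]
    refine le_trans ?_ (hmain y r hr S hS)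
    unfold morreyA
    refine mul_le_mul_right (lintegral_mono fun x => ?_) _
    exact ENNReal.rpow_le_rpow (hconv_le x) hp0.le
  -- bound morreyA f by M^p
  set M := morreyNorm n p β f with hMdef
  have hMp : (M : ℝ≥0∞) ^ p ≠ ⊤ := (ENNReal.rpow_lt_top_of_nonneg hp0.le hfM.ne).ne
  have hAf : ∀ (z : EuclideanSpace ℝ (Fin n)) (r : ℝ), 0 < r →
      morreyA n p β f z r ≤ M ^ p := by
    intro z r hr
    have h1 : (morreyA n p β f z r) ^ (1 / p) ≤ M := by
      refine le_trans ?_ (le_iSup _ z)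
      refine le_trans ?_ (le_iSup _ r)
      exact le_iSup (fun _ : 0 < r => (morreyA n p β f z r) ^ (1 / p)) hr
    have h2 := ENNReal.rpow_le_rpow h1 hp0.le
    rwa [← ENNReal.rpow_mul, one_div_mul_cancel hp0.ne', ENNReal.rpow_one] at h2
  refine ⟨?_, ?_, ?_⟩
  · -- a.e. integrability
    have hball : ∀ k : ℕ, ∫⁻ x in ball (0 : EuclideanSpace ℝ (Fin n)) (k + 1), (h x) ^ p < ⊤ := by
      intro k
      have hr : (0:ℝ) < k + 1 := by positivity
      have h1 := hmain 0 (k + 1) hr (M ^ p) (fun z => hAf z _ hr)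
      have h2 : ∫⁻ x in ball (0 : EuclideanSpace ℝ (Fin n)) (k + 1), (h x) ^ p
          ≤ ENNReal.ofReal ((k + 1 : ℝ) ^ β) * (G ^ p * M ^ p) := by
        calc ∫⁻ x in ball (0 : EuclideanSpace ℝ (Fin n)) (k + 1), (h x) ^ p
            = (ENNReal.ofReal ((k + 1 : ℝ) ^ β) * ENNReal.ofReal ((k + 1 : ℝ) ^ (-β))) *
              ∫⁻ x in ball (0 : EuclideanSpace ℝ (Fin n)) (k + 1), (h x) ^ p := by
              rw [cancel_aux hr, one_mul]
          _ = ENNReal.ofReal ((k + 1 : ℝ) ^ β) * (ENNReal.ofReal ((k + 1 : ℝ) ^ (-β)) *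
              ∫⁻ x in ball (0 : EuclideanSpace ℝ (Fin n)) (k + 1), (h x) ^ p) := by rw [mul_assoc]
          _ ≤ _ := mul_le_mul_right h1 _
      refine lt_of_le_of_lt h2 ?_
      exact ENNReal.mul_lt_top ENNReal.ofReal_lt_top
        (ENNReal.mul_lt_top (lt_top_iff_ne_top.mpr hGp) (lt_top_iff_ne_top.mpr hMp))
    have hhp_m : Measurable fun x => (h x) ^ p :=
      ENNReal.continuous_rpow_const.measurable.comp hhm
    have hknull : ∀ k : ℕ,
        volume ({x : EuclideanSpace ℝ (Fin n) | h x = ⊤} ∩ ball 0 (k + 1)) = 0 := by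
      intro k
      have h1 : ∀ᵐ x ∂(volume.restrict (ball (0 : EuclideanSpace ℝ (Fin n)) (k + 1))),
          (h x) ^ p < ⊤ := ae_lt_top hhp_m (hball k).ne
      have h2 : ∀ᵐ x ∂(volume.restrict (ball (0 : EuclideanSpace ℝ (Fin n)) (k + 1))),
          ¬ (h x = ⊤) := by
        refine h1.mono fun x hx hc => ?_
        rw [hc, ENNReal.top_rpow_of_pos hp0] at hx
        exact (lt_irrefl _ hx)
      have h3 := ae_iff.mp h2
      simp only [not_not] at h3
      rw [Measure.restrict_apply (show MeasurableSet {a : EuclideanSpace ℝ (Fin n) | h a = ⊤} from hhm (measurableSet_singleton ⊤))] at h3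
      exact h3
    have hnull : volume {x : EuclideanSpace ℝ (Fin n) | h x = ⊤} = 0 := by
      refine measure_mono_null (fun x hx => ?_) (measure_iUnion_null hknull)
      refine Set.mem_iUnion.2 ⟨⌈‖x‖⌉₊, hx, ?_⟩
      rw [mem_ball, dist_zero_right]
      exact lt_of_le_of_lt (Nat.le_ceil _) (by exact_mod_cast lt_add_one (⌈‖x‖⌉₊ : ℝ))
    have hae : ∀ᵐ x : EuclideanSpace ℝ (Fin n), h x ≠ ⊤ := by
      rw [ae_iff]
      simpa using hnull
    refine hae.mono fun x hx => ?_
    have hint' : Integrable (fun z => f (x - z) * g' z) := by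
      constructor
      · exact ((hf.comp (measurable_const.sub measurable_id)).mul hg'm).aestronglyMeasurable
      · rw [hasFiniteIntegral_def]
        have : ∫⁻ z, (‖f (x - z) * g' z‖₊ : ℝ≥0∞) = h x :=
          lintegral_congr fun z => by rw [nnnorm_mul, ENNReal.coe_mul]
        rw [← this] at hx
        exact lt_top_iff_ne_top.mpr hx
    exact hint'.congr (hg'ae.symm.mono fun z hz => by dsimp only; rw [hz])
  · -- finiteness of Morrey norm
    have : morreyNorm n p β (fun x => ∫ z, f (x - z) * g z) ≤ (G ^ p * M ^ p) ^ (1 / p) := by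
      refine iSup_le fun y => iSup_le fun r => iSup_le fun hr => ?_
      exact ENNReal.rpow_le_rpow (hmorA y r hr (M ^ p) (fun z => hAf z r hr))
        (by positivity)
    refine lt_of_le_of_lt this ?_
    exact ENNReal.rpow_lt_top_of_nonneg (by positivity)
      (ENNReal.mul_ne_top hGp hMp)
  · -- vanishing at infinity
    set U := fun t : ℝ => ⨆ (y : EuclideanSpace ℝ (Fin n)) (r : ℝ) (_ : t ≤ r),
      morreyA n p β f y r with hUdef
    have hUb : ∀ t : ℝ, 1 ≤ t →
        (⨆ (y : EuclideanSpace ℝ (Fin n)) (r : ℝ) (_ : t ≤ r),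
          morreyA n p β (fun x => ∫ z, f (x - z) * g z) y r) ≤ G ^ p * U t := by
      intro t ht
      refine iSup_le fun y => iSup_le fun r => iSup_le fun hr => ?_
      have hrpos : 0 < r := lt_of_lt_of_le zero_lt_one (le_trans ht hr)
      refine hmorA y r hrpos (U t) fun z => ?_
      refine le_trans ?_ (le_iSup _ z)
      refine le_trans ?_ (le_iSup _ r)
      exact le_iSup (fun _ : t ≤ r => morreyA n p β f z r) hr
    have htendsto : Tendsto (fun t => G ^ p * U t) atTop (nhds 0) := by
      have := ENNReal.Tendsto.const_mul (a := G ^ p) hfi (Or.inr hGp)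
      simpa using this
    refine tendsto_of_tendsto_of_tendsto_of_le_of_le' tendsto_const_nhds htendsto ?_ ?_
    · exact Eventually.of_forall fun t => zero_le
    · exact eventually_atTop.2 ⟨1, fun t ht => hUb t ht⟩
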